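/- Let $G(r,t) = (4\pi t)^{-3/2} e^{-t} \frac{r}{\sinh r} e^{-r^2/(4t)}$ and $E_1(s,t) = (4\pi t)^{-1/2} e^{-s^2/(4t)}$. Then for every $L > 0$: $\frac{4\pi (\sinh r)^2\, G(r,t)}{E_1(r - 2t,\, t)} \to 1$ as $t \to \infty$, uniformly on the set $\{r > 0 : |r - 2t| \le L\sqrt{t}\}$. -/

import Mathlib

open Real Filter

/-- The fundamental solution of the heat equation on `ℍ³` in geodesic polar
coordinates: `G(r,t) = (4πt)^(-3/2) e^{-t} (r / sinh r) e^{-r²/(4t)}`. -/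
noncomputable def hypHeatKernel (r t : ℝ) : ℝ :=
  (4 * π * t) ^ (-(3 : ℝ) / 2) * Real.exp (-t) * (r / Real.sinh r) *
    Real.exp (-r ^ 2 / (4 * t))

/-- The one-dimensional Gaussian heat kernel `E₁(s,t) = (4πt)^(-1/2) e^{-s²/(4t)}`. -/
noncomputable def gaussKernel1D (s t : ℝ) : ℝ :=
  (4 * π * t) ^ (-(1 : ℝ) / 2) * Real.exp (-s ^ 2 / (4 * t))

lemma key_ratio (r t : ℝ) (hr : 0 < r) (ht : 0 < t) :
    4 * π * (Real.sinh r) ^ 2 * hypHeatKernel r t / gaussKernel1D (r - 2 * t) t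
      = r * (1 - Real.exp (-(2*r))) / (2 * t) := by
  have hA : (0:ℝ) < 4 * π * t := by positivity
  have h32 : (4 * π * t) ^ (-(3 : ℝ) / 2)
      = (4 * π * t) ^ (-(1 : ℝ) / 2) * (4 * π * t)⁻¹ := by
    rw [← Real.rpow_neg_one, ← Real.rpow_add hA]; norm_num
  have hexp : Real.exp (-t) * Real.exp (-r ^ 2 / (4 * t))
      = Real.exp (-(r - 2 * t) ^ 2 / (4 * t)) * Real.exp (-r) := by
    rw [← Real.exp_add, ← Real.exp_add]
    congr 1
    field_simp
    ring
  have hsinh : Real.sinh r ≠ 0 := (Real.sinh_pos_iff.2 hr).ne'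
  have hpow : (4 * π * t) ^ (-(1 : ℝ) / 2) ≠ 0 := (Real.rpow_pos_of_pos hA _).ne'
  have hE : Real.exp (-(r - 2 * t) ^ 2 / (4 * t)) ≠ 0 := Real.exp_ne_zero _
  have hsr : Real.sinh r * Real.exp (-r) = (1 - Real.exp (-(2*r))) / 2 := by
    have h1 : Real.exp r * Real.exp (-r) = 1 := by rw [← Real.exp_add]; simp
    rw [Real.sinh_eq, show -(2*r) = -r + -r by ring, Real.exp_add]
    linear_combination h1 / 2
  unfold hypHeatKernel gaussKernel1D
  rw [h32]
  rw [show (4 * π * t) ^ (-(1:ℝ) / 2) * (4 * π * t)⁻¹ * Real.exp (-t) * (r / Real.sinh r) *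
        Real.exp (-r ^ 2 / (4 * t))
      = (4 * π * t) ^ (-(1:ℝ) / 2) * (4 * π * t)⁻¹ * (r / Real.sinh r) *
        (Real.exp (-t) * Real.exp (-r ^ 2 / (4 * t))) by ring, hexp]
  rw [div_eq_iff (by positivity)]
  field_simp
  linear_combination 2 * hsr


/-- The radial mass density of the hyperbolic heat kernel converges to the drifted 1D
Gaussian: `4π (sinh r)² G(r,t) / E₁(r - 2t, t) → 1` as `t → ∞`, uniformly on
`{r > 0 : |r - 2t| ≤ L√t}`. -/
theorem hypHeatKernel_density_ratio_to_one :
    ∀ L > (0 : ℝ), ∀ ε > (0 : ℝ), ∃ T : ℝ, ∀ t ≥ T, ∀ r > (0 : ℝ),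
      |r - 2 * t| ≤ L * Real.sqrt t →
      |4 * π * (Real.sinh r) ^ 2 * hypHeatKernel r t / gaussKernel1D (r - 2 * t) t - 1|
        ≤ ε := by
  intro L hL ε hε
  refine ⟨max (max (L^2) 1) (max ((2*L/ε)^2) (3/ε)), fun t ht r hr habs => ?_⟩
  have ht1 : (1:ℝ) ≤ t := le_trans (le_trans (le_max_right _ _) (le_max_left _ _)) ht
  have ht0 : (0:ℝ) < t := by linarith
  have htL : L^2 ≤ t := le_trans (le_trans (le_max_left _ _) (le_max_left _ _)) ht
  have htE : (2*L/ε)^2 ≤ t := le_trans (le_trans (le_max_left _ _) (le_max_right _ _)) ht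
  have ht3 : 3/ε ≤ t := le_trans (le_trans (le_max_right _ _) (le_max_right _ _)) ht
  have h3e : 3 ≤ ε * t := by
    rw [div_le_iff₀ hε] at ht3; linarith [ht3]
  have hs : Real.sqrt t * Real.sqrt t = t := Real.mul_self_sqrt ht0.le
  have hsn : 0 ≤ Real.sqrt t := Real.sqrt_nonneg t
  have hLs : L ≤ Real.sqrt t := by
    have := Real.sqrt_le_sqrt htL
    rwa [Real.sqrt_sq hL.le] at this
  have h2L : 2*L/ε ≤ Real.sqrt t := by
    have := Real.sqrt_le_sqrt htE
    rwa [Real.sqrt_sq (by positivity)] at this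
  have hLst : L * Real.sqrt t ≤ ε * t / 2 := by
    have h2L' : 2*L ≤ ε * Real.sqrt t := by
      rw [div_le_iff₀ hε] at h2L; linarith
    nlinarith
  have hLt : L * Real.sqrt t ≤ t := by nlinarith
  have hrle : r ≤ 3 * t := by
    have := abs_le.1 habs
    linarith [this.2]
  have hrge : t ≤ r := by
    have := abs_le.1 habs
    linarith [this.1]
  set η := Real.exp (-(2*r)) with hη
  have hη0 : 0 < η := Real.exp_pos _
  have hη1 : η ≤ 1/(2*t) := by
    have e1 : η ≤ Real.exp (-(2*t)) := Real.exp_le_exp.2 (by linarith)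
    have e2 : Real.exp (-(2*t)) ≤ 1/(2*t) := by
      rw [Real.exp_neg]
      rw [one_div]
      exact inv_anti₀ (by linarith) (by linarith [Real.add_one_le_exp (2*t)])
    linarith
  have hrη : r * η ≤ 3/2 := by
    have h1 : r * η ≤ 3 * t * η := by nlinarith
    have h2 : 3 * t * η ≤ 3 * t * (1/(2*t)) := by nlinarith
    have h3 : 3 * t * (1/(2*t)) = 3/2 := by field_simp
    linarith
  rw [key_ratio r t hr ht0]
  have heq : r * (1 - η) / (2 * t) - 1 = ((r - 2*t) - r*η) / (2*t) := by
    field_simp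
    ring
  rw [heq, abs_div, abs_of_pos (by linarith : (0:ℝ) < 2*t), div_le_iff₀ (by linarith)]
  have htri : |(r - 2*t) - r*η| ≤ |r - 2*t| + r*η := by
    have := abs_sub (r - 2*t) (r*η)
    rwa [abs_of_pos (by positivity : (0:ℝ) < r*η)] at this
  nlinarith [htri, habs, hLst, hrη, mul_pos hε ht0]
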